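/- Let G be a finite group, 𝒜 a nonempty finite set, s : 𝒜 → G, and w : 𝒜 → G → ℝ nonnegative weights with ∑_{a ∈ 𝒜} w(a, g) = 1 for every g ∈ G; let V_a := ∑_{g ∈ G} √(w(a, g)) · E_{s(a)·g, g} and Φ(X) := ∑_{a ∈ 𝒜} V_a X V_aᴴ. Fix h ∈ G with h ≠ 1, and for c : G → ℂ set X := ∑_{g ∈ G} c(g) · E_{g, g·h}. Then: (a) Φ(X) = ∑_{a ∈ 𝒜} ∑_{g ∈ G} √(w(a, g) · w(a, g·h)) · c(g) · E_{s(a)·g, s(a)·g·h}; in particular Φ(X)(k, k') = 0 unless k' = k·h; and (b) if q ≥ 0 satisfies ∑_{a ∈ 𝒜} √(w(a, g) · w(a, g·h)) ≤ q for every g ∈ G, then ∑_{k ∈ G} | Φ(X)(k, k·h) | ≤ q · ∑_{g ∈ G} |c(g)|. -/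

import Mathlib

open Matrix Finset

/-- **Off-diagonal sector invariance and ℓ¹ contraction for the disordered
group-action channel.**
For `X = ∑ g c g E_{g, gh}` with `h ≠ 1`, the non-selective channel
`Φ X = ∑ a V a X (V a)ᴴ` stays in the sector `𝓑_h`, with the explicit formula
(a), and (b) the ℓ¹ norm of the coefficients contracts by any uniform
Cauchy–Schwarz overlap bound `q`. -/
theorem stmt13
    {G : Type*} [Group G] [Fintype G] [DecidableEq G]
    {𝒜 : Type*} [Fintype 𝒜] [Nonempty 𝒜]
    (s : 𝒜 → G) (w : 𝒜 → G → ℝ)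
    (hw0 : ∀ a g, 0 ≤ w a g) (hw1 : ∀ g, ∑ a, w a g = 1)
    (V : 𝒜 → Matrix G G ℂ)
    (hV : ∀ a, V a = ∑ g, (Real.sqrt (w a g) : ℂ) • Matrix.single (s a * g) g 1)
    (Φ : Matrix G G ℂ → Matrix G G ℂ)
    (hΦ : ∀ X, Φ X = ∑ a, V a * X * (V a)ᴴ)
    (h : G) (hh : h ≠ 1) (c : G → ℂ)
    (X : Matrix G G ℂ)
    (hX : X = ∑ g, c g • Matrix.single g (g * h) 1) :
    (Φ X = ∑ a, ∑ g,
        (((Real.sqrt (w a g * w a (g * h)) : ℝ) : ℂ) * c g) •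
          Matrix.single (s a * g) (s a * g * h) 1) ∧
    (∀ k k' : G, k' ≠ k * h → Φ X k k' = 0) ∧
    (∀ q : ℝ, 0 ≤ q →
      (∀ g, ∑ a, Real.sqrt (w a g * w a (g * h)) ≤ q) →
      ∑ k, ‖Φ X k (k * h)‖ ≤ q * ∑ g, ‖c g‖) := by
  -- entry formula for V a
  have hVa : ∀ a i x, V a i x = if x = (s a)⁻¹ * i then ((Real.sqrt (w a x) : ℝ) : ℂ) else 0 := by
    intro a i x
    rw [hV a]
    simp only [Matrix.sum_apply, Matrix.smul_apply, Matrix.single, Matrix.of_apply,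
      smul_eq_mul, mul_ite, mul_one, mul_zero, and_comm, ite_and]
    rw [Finset.sum_ite_eq' univ x]
    simp [eq_inv_mul_iff_mul_eq, eq_comm]
  -- entry formula for X
  have hXa : ∀ x y, X x y = if y = x * h then c x else 0 := by
    intro x y
    rw [hX]
    simp only [Matrix.sum_apply, Matrix.smul_apply, Matrix.single, Matrix.of_apply,
      smul_eq_mul, mul_ite, mul_one, mul_zero, ite_and]
    rw [Finset.sum_ite_eq' univ x]
    simp [eq_comm]
  -- entry formula for Φ X
  have hE : ∀ k k', Φ X k k' = if k' = k * h then
      ∑ a, ((Real.sqrt (w a ((s a)⁻¹ * k) * w a ((s a)⁻¹ * k * h)) : ℝ) : ℂ)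
        * c ((s a)⁻¹ * k) else 0 := by
    intro k k'
    rw [hΦ]
    simp only [Matrix.sum_apply]
    have step : ∀ a : 𝒜, (V a * X * (V a)ᴴ) k k'
        = if k' = k * h then
            ((Real.sqrt (w a ((s a)⁻¹ * k) * w a ((s a)⁻¹ * k * h)) : ℝ) : ℂ)
              * c ((s a)⁻¹ * k) else 0 := by
      intro a
      simp only [Matrix.mul_apply, Matrix.conjTranspose_apply, hVa, ite_mul, zero_mul,
        Finset.sum_ite_eq', Finset.mem_univ, if_true, hXa]
      simp only [mul_ite, mul_zero, ite_mul, zero_mul, Finset.sum_ite_eq', Finset.mem_univ,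
        if_true, apply_ite (starRingEnd ℂ), Complex.conj_ofReal, map_zero]
      have hcond : ((s a)⁻¹ * k * h = (s a)⁻¹ * k') ↔ (k' = k * h) := by
        rw [mul_assoc, mul_right_inj, eq_comm]
      rw [if_congr hcond rfl rfl]
      by_cases hk : k' = k * h
      · simp [hk, Real.sqrt_mul (hw0 a _), mul_assoc, mul_comm, mul_left_comm]
      · simp [hk]
    rw [Finset.sum_congr rfl fun a _ => step a]
    by_cases hk : k' = k * h <;> simp [hk]
  -- entry formula for the RHS of (a)
  have hR : ∀ k k', (∑ a, ∑ g,
        (((Real.sqrt (w a g * w a (g * h)) : ℝ) : ℂ) * c g) •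
          Matrix.single (s a * g) (s a * g * h) 1) k k'
      = if k' = k * h then
          ∑ a, ((Real.sqrt (w a ((s a)⁻¹ * k) * w a ((s a)⁻¹ * k * h)) : ℝ) : ℂ)
            * c ((s a)⁻¹ * k) else 0 := by
    intro k k'
    simp only [Matrix.sum_apply, Matrix.smul_apply, Matrix.single, Matrix.of_apply,
      smul_eq_mul, mul_ite, mul_one, mul_zero]
    have inner : ∀ a : 𝒜, (∑ g, if s a * g = k ∧ s a * g * h = k' then
        ((Real.sqrt (w a g * w a (g * h)) : ℝ) : ℂ) * c g else 0)
        = if k' = k * h then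
            ((Real.sqrt (w a ((s a)⁻¹ * k) * w a ((s a)⁻¹ * k * h)) : ℝ) : ℂ)
              * c ((s a)⁻¹ * k) else 0 := by
      intro a
      have : ∀ g : G, (s a * g = k ∧ s a * g * h = k') ↔ (g = (s a)⁻¹ * k ∧ k' = k * h) := by
        intro g
        constructor
        · rintro ⟨h1, h2⟩
          subst h1; exact ⟨by group, h2.symm⟩
        · rintro ⟨h1, h2⟩
          subst h1; subst h2; exact ⟨by group, by group⟩
      simp only [this, ite_and]
      rw [Finset.sum_ite_eq' univ ((s a)⁻¹ * k)]
      simp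
    rw [Finset.sum_congr rfl fun a _ => inner a]
    by_cases hk : k' = k * h <;> simp [hk]
  refine ⟨?_, ?_, ?_⟩
  · ext k k'
    rw [hE, hR]
  · intro k k' hk
    rw [hE]
    simp [hk]
  · intro q hq hqb
    have habs : ∀ k, ‖Φ X k (k * h)‖
        ≤ ∑ a, Real.sqrt (w a ((s a)⁻¹ * k) * w a ((s a)⁻¹ * k * h))
            * ‖c ((s a)⁻¹ * k)‖ := by
      intro k
      rw [hE k (k * h), if_pos rfl]
      refine (norm_sum_le _ _).trans ?_
      refine Finset.sum_le_sum fun a _ => ?_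
      rw [norm_mul, Complex.norm_real, Real.norm_eq_abs, abs_of_nonneg (Real.sqrt_nonneg _)]
    calc ∑ k, ‖Φ X k (k * h)‖
        ≤ ∑ k, ∑ a, Real.sqrt (w a ((s a)⁻¹ * k) * w a ((s a)⁻¹ * k * h))
            * ‖c ((s a)⁻¹ * k)‖ := Finset.sum_le_sum fun k _ => habs k
      _ = ∑ a, ∑ k, Real.sqrt (w a ((s a)⁻¹ * k) * w a ((s a)⁻¹ * k * h))
            * ‖c ((s a)⁻¹ * k)‖ := Finset.sum_comm
      _ = ∑ a, ∑ g, Real.sqrt (w a g * w a (g * h)) * ‖c g‖ := by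
          refine Finset.sum_congr rfl fun a _ => ?_
          refine Fintype.sum_equiv (Equiv.mulLeft (s a)⁻¹) _ _ fun g => ?_
          simp
      _ = ∑ g, (∑ a, Real.sqrt (w a g * w a (g * h))) * ‖c g‖ := by
          rw [Finset.sum_comm]
          simp [Finset.sum_mul]
      _ ≤ ∑ g, q * ‖c g‖ := Finset.sum_le_sum fun g _ =>
          mul_le_mul_of_nonneg_right (hqb g) (norm_nonneg _)
      _ = q * ∑ g, ‖c g‖ := by rw [Finset.mul_sum]
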